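/- arXiv:2101.01676 — 3 statements merged into one kernel-verified Lean document; each statement's English description precedes it below -/
import Mathlib

section
/- Let 𝔐 be a class of preference models and ★ a dynamic operator closed over 𝔐. The schema Eφ → (μφ ↔ [★φ]μ⊤) is valid in ⟨𝔐, ★⟩ for every φ ∈ L_0 if and only if ★ satisfies (Faith) in 𝔐, i.e., for every M = (W, ≤, v) ∈ 𝔐 and every φ ∈ L_0 with ⟦φ⟧_M ≠ ∅ one has Min_≤ ⟦φ⟧_M = Min_{≤_{★φ}} W, where ★(M,φ) = (W, ≤_{★φ}, v). -/
inductive PForm (P : Type) : Type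
  | atom : P → PForm P
  | neg  : PForm P → PForm P
  | and  : PForm P → PForm P → PForm P

inductive DForm (P : Type) : Type
  | atom  : P → DForm P
  | neg   : DForm P → DForm P
  | and   : DForm P → DForm P → DForm P
  | all   : DForm P → DForm P
  | boxLe : DForm P → DForm P
  | boxLt : DForm P → DForm P
  | dyn   : PForm P → DForm P → DForm P

structure PrefModel (P : Type) where
  W : Type
  le : W → W → Prop
  refl : ∀ w, le w w
  trans : ∀ w₁ w₂ w₃, le w₁ w₂ → le w₂ w₃ → le w₁ w₃
  wf : WellFounded (fun w w' => le w w' ∧ ¬ le w' w)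
  val : P → Set W

namespace PrefModel
variable {P : Type}
def lt (M : PrefModel P) (w w' : M.W) : Prop := M.le w w' ∧ ¬ M.le w' w
def Min (M : PrefModel P) (S : Set M.W) : Set M.W :=
  {w | w ∈ S ∧ ¬ ∃ w' ∈ S, M.le w' w ∧ ¬ M.le w w'}
end PrefModel

def psat {P : Type} (M : PrefModel P) : PForm P → M.W → Prop
  | .atom p, w => w ∈ M.val p
  | .neg φ, w => ¬ psat M φ w
  | .and φ ψ, w => psat M φ w ∧ psat M ψ w

def pext {P : Type} (M : PrefModel P) (φ : PForm P) : Set M.W := {w | psat M φ w}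

structure DynOp (P : Type) where
  rel : (M : PrefModel P) → PForm P → M.W → M.W → Prop
  refl : ∀ M φ w, rel M φ w w
  trans : ∀ M φ w₁ w₂ w₃, rel M φ w₁ w₂ → rel M φ w₂ w₃ → rel M φ w₁ w₃
  wf : ∀ M φ, WellFounded (fun w w' => rel M φ w w' ∧ ¬ rel M φ w' w)

def DynOp.apply {P : Type} (s : DynOp P) (M : PrefModel P) (φ : PForm P) : PrefModel P where
  W := M.W
  le := s.rel M φ
  refl := s.refl M φ
  trans := s.trans M φ
  wf := s.wf M φ
  val := M.val

def DynOp.srel {P : Type} (s : DynOp P) (M : PrefModel P) (φ : PForm P) (w w' : M.W) : Prop :=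
  s.rel M φ w w' ∧ ¬ s.rel M φ w' w

def PForm.toD {P : Type} : PForm P → DForm P
  | .atom p => .atom p
  | .neg φ => .neg φ.toD
  | .and φ ψ => .and φ.toD ψ.toD

namespace DForm
variable {P : Type}
def imp (ξ ψ : DForm P) : DForm P := .neg (.and ξ (.neg ψ))
def iff (ξ ψ : DForm P) : DForm P := .and (imp ξ ψ) (imp ψ ξ)
def or (ξ ψ : DForm P) : DForm P := .neg (.and (.neg ξ) (.neg ψ))
def exi (ξ : DForm P) : DForm P := .neg (.all (.neg ξ))
def diaLt (ξ : DForm P) : DForm P := .neg (.boxLt (.neg ξ))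
def mu (ξ : DForm P) : DForm P := .and ξ (.neg (diaLt ξ))
def bel (ψ χ : DForm P) : DForm P := .all (imp (mu χ) ψ)
end DForm

def dsat {P : Type} (s : DynOp P) : DForm P → (M : PrefModel P) → M.W → Prop
  | .atom p, M, w => w ∈ M.val p
  | .neg ξ, M, w => ¬ dsat s ξ M w
  | .and ξ₁ ξ₂, M, w => dsat s ξ₁ M w ∧ dsat s ξ₂ M w
  | .all ξ, M, _ => ∀ w', dsat s ξ M w'
  | .boxLe ξ, M, w => ∀ w', M.le w' w → dsat s ξ M w'
  | .boxLt ξ, M, w => ∀ w', M.lt w' w → dsat s ξ M w'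
  | .dyn φ ξ, M, w => dsat s ξ (s.apply M φ) w

def ClosedOver {P : Type} (s : DynOp P) (𝔐 : Set (PrefModel P)) : Prop :=
  ∀ M ∈ 𝔐, ∀ φ : PForm P, s.apply M φ ∈ 𝔐


lemma dsat_toD {P : Type} (s : DynOp P) (φ : PForm P) (M : PrefModel P) (w : M.W) :
    dsat s φ.toD M w ↔ psat M φ w := by
  induction φ generalizing w with
  | atom p => simp [PForm.toD, dsat, psat]
  | neg φ ih => simp [PForm.toD, dsat, psat, ih]
  | and φ ψ ih₁ ih₂ => simp [PForm.toD, dsat, psat, ih₁, ih₂]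

lemma mem_Min {P : Type} (M : PrefModel P) (S : Set M.W) (w : M.W) :
    w ∈ M.Min S ↔ w ∈ S ∧ ∀ w', w' ∈ S → ¬ M.lt w' w := by
  simp [PrefModel.Min, PrefModel.lt]

lemma dsat_mu {P : Type} (s : DynOp P) (φ : PForm P) (M : PrefModel P) (w : M.W) :
    dsat s (DForm.mu φ.toD) M w ↔ w ∈ M.Min (pext M φ) := by
  simp [DForm.mu, DForm.diaLt, dsat, dsat_toD, mem_Min, pext]
  tauto

lemma dsat_mu_top {P : Type} (s : DynOp P) (top : PForm P)
    (htop : ∀ (M : PrefModel P) (w : M.W), psat M top w)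
    (M : PrefModel P) (w : M.W) :
    dsat s (DForm.mu top.toD) M w ↔ w ∈ M.Min Set.univ := by
  simp [DForm.mu, DForm.diaLt, dsat, dsat_toD, mem_Min, htop]

lemma dsat_neg' {P : Type} (s : DynOp P) (ξ : DForm P) (M : PrefModel P) (w : M.W) :
    dsat s (DForm.neg ξ) M w ↔ ¬ dsat s ξ M w := Iff.rfl

lemma dsat_and' {P : Type} (s : DynOp P) (ξ ψ : DForm P) (M : PrefModel P) (w : M.W) :
    dsat s (DForm.and ξ ψ) M w ↔ (dsat s ξ M w ∧ dsat s ψ M w) := Iff.rfl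

lemma dsat_dyn' {P : Type} (s : DynOp P) (φ : PForm P) (ξ : DForm P) (M : PrefModel P)
    (w : M.W) : dsat s (DForm.dyn φ ξ) M w ↔ dsat s ξ (s.apply M φ) w := Iff.rfl

lemma dsat_exi {P : Type} (s : DynOp P) (φ : PForm P) (M : PrefModel P) (w : M.W) :
    dsat s (DForm.exi φ.toD) M w ↔ ∃ x, psat M φ x := by
  simp [DForm.exi, dsat, dsat_toD]

lemma dsat_schema {P : Type} (s : DynOp P) (φ top : PForm P)
    (htop : ∀ (M : PrefModel P) (w : M.W), psat M top w)
    (M : PrefModel P) (w : M.W) :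
    dsat s ((DForm.exi φ.toD).imp
        ((DForm.mu φ.toD).iff (DForm.dyn φ (DForm.mu top.toD)))) M w ↔
      ((∃ x, psat M φ x) →
        (w ∈ M.Min (pext M φ) ↔ w ∈ (s.apply M φ).Min Set.univ)) := by
  have h1 := dsat_mu s φ M w
  have h2 := dsat_mu_top s top htop (s.apply M φ) w
  simp only [DForm.imp, DForm.iff, dsat_neg', dsat_and', dsat_dyn', dsat_exi, h1, h2]
  tauto

theorem faith_characterisation {P : Type} (𝔐 : Set (PrefModel P)) (s : DynOp P)
    (hclosed : ClosedOver s 𝔐)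
    (top : PForm P) (htop : ∀ (M : PrefModel P) (w : M.W), psat M top w) :
    (∀ φ : PForm P, ∀ M ∈ 𝔐, ∀ w : M.W,
        dsat s ((DForm.exi φ.toD).imp
          ((DForm.mu φ.toD).iff (DForm.dyn φ (DForm.mu top.toD)))) M w) ↔
      (∀ M ∈ 𝔐, ∀ φ : PForm P, pext M φ ≠ ∅ →
        M.Min (pext M φ) = (s.apply M φ).Min Set.univ) := by
  constructor
  · intro h M hM φ hne
    rw [← Set.nonempty_iff_ne_empty] at hne
    ext w
    exact ((dsat_schema s φ top htop M w).mp (h φ M hM w)) hne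
  · intro h φ M hM w
    rw [dsat_schema s φ top htop M w]
    intro hne
    have heq := h M hM φ (Set.nonempty_iff_ne_empty.mp hne)
    rw [heq]
    exact Iff.rfl
end

section
/- Let 𝔐 be a class of preference models and ★ a dynamic operator closed over 𝔐. The schemata (1) [★φ][≤]ξ → (¬φ → [≤](¬φ → [★φ]ξ)), (2) [★φ][<]ξ → (¬φ → [<](¬φ → [★φ]ξ)), (3) [≤][★φ]ξ → (¬φ → [★φ][≤](¬φ → ξ)), (4) [<][★φ]ξ → (¬φ → [★φ][<](¬φ → ξ)) are valid in ⟨𝔐, ★⟩ for all φ ∈ L_0 and ξ ∈ L_≤(★) if and only if ★ is 𝔐-DP2-compliant. -/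
/-- `★` is `𝔐`-DP2-compliant. -/
def DP2Compliant {P : Type} (s : DynOp P) (𝔐 : Set (PrefModel P)) : Prop :=
  ∀ M ∈ 𝔐, ∀ (φ : PForm P) (w w' : M.W), ¬ psat M φ w → ¬ psat M φ w' →
    -- (DP2a), non-strict and strict versions
    ((s.rel M φ w w' → ∀ ξ : DForm P, dsat s (.dyn φ ξ) M w →
        ∃ w'' : M.W, ¬ psat M φ w'' ∧ dsat s (.dyn φ ξ) M w'' ∧ M.le w'' w') ∧
     (s.srel M φ w w' → ∀ ξ : DForm P, dsat s (.dyn φ ξ) M w →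
        ∃ w'' : M.W, ¬ psat M φ w'' ∧ dsat s (.dyn φ ξ) M w'' ∧ M.lt w'' w') ∧
    -- (DP2b), non-strict and strict versions
     (M.le w w' → ∀ ξ : DForm P, dsat s (.dyn φ ξ) M w →
        ∃ w'' : M.W, ¬ psat M φ w'' ∧ dsat s (.dyn φ ξ) M w'' ∧ s.rel M φ w'' w') ∧
     (M.lt w w' → ∀ ξ : DForm P, dsat s (.dyn φ ξ) M w →
        ∃ w'' : M.W, ¬ psat M φ w'' ∧ dsat s (.dyn φ ξ) M w'' ∧ s.srel M φ w'' w'))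


lemma dsat_toD_iff {P : Type} (s : DynOp P) (ψ : PForm P) (M : PrefModel P) (w : M.W) :
    dsat s ψ.toD M w ↔ psat M ψ w := by
  induction ψ generalizing w with
  | atom p => exact Iff.rfl
  | neg χ ih => simp [dsat, psat, PForm.toD, ih]
  | and χ χ' ih ih' => simp [dsat, psat, PForm.toD, ih, ih']

lemma psat_apply_iff {P : Type} (s : DynOp P) (φ ψ : PForm P) (M : PrefModel P)
    (w : (s.apply M φ).W) : psat (s.apply M φ) ψ w ↔ psat M ψ w := by
  induction ψ with
  | atom p => exact Iff.rfl
  | neg χ ih => simp [psat, ih]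
  | and χ χ' ih ih' => simp [psat, ih, ih']

lemma dsat_imp {P : Type} (s : DynOp P) (a b : DForm P) (M : PrefModel P) (w : M.W) :
    dsat s (a.imp b) M w ↔ (dsat s a M w → dsat s b M w) := by
  simp [DForm.imp, dsat]

lemma dsat_negtoD {P : Type} (s : DynOp P) (φ : PForm P) (M : PrefModel P) (w : M.W) :
    dsat s (DForm.neg φ.toD) M w ↔ ¬ psat M φ w := by
  simp [dsat, dsat_toD_iff]

lemma dsat_negtoD_apply {P : Type} (s : DynOp P) (φ ψ : PForm P) (M : PrefModel P)
    (w : (s.apply M ψ).W) : dsat s (DForm.neg φ.toD) (s.apply M ψ) w ↔ ¬ psat M φ w := by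
  simp [dsat, dsat_toD_iff, psat_apply_iff]

theorem dp2_compliance_characterisation {P : Type}
    (𝔐 : Set (PrefModel P)) (s : DynOp P) (hclosed : ClosedOver s 𝔐) :
    (∀ (φ : PForm P) (ξ : DForm P), ∀ M ∈ 𝔐, ∀ w : M.W,
      dsat s ((DForm.dyn φ (.boxLe ξ)).imp
        ((DForm.neg φ.toD).imp (.boxLe ((DForm.neg φ.toD).imp (.dyn φ ξ))))) M w ∧
      dsat s ((DForm.dyn φ (.boxLt ξ)).imp
        ((DForm.neg φ.toD).imp (.boxLt ((DForm.neg φ.toD).imp (.dyn φ ξ))))) M w ∧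
      dsat s ((DForm.boxLe (.dyn φ ξ)).imp
        ((DForm.neg φ.toD).imp (.dyn φ (.boxLe ((DForm.neg φ.toD).imp ξ))))) M w ∧
      dsat s ((DForm.boxLt (.dyn φ ξ)).imp
        ((DForm.neg φ.toD).imp (.dyn φ (.boxLt ((DForm.neg φ.toD).imp ξ))))) M w) ↔ DP2Compliant s 𝔐 := by
  constructor
  · intro hval M hM φ w w' hw hw'
    refine ⟨?_, ?_, ?_, ?_⟩
    · -- DP2a non-strict: use axiom 3
      intro hrel ξ hξ
      by_contra hcon
      push_neg at hcon
      have h := (hval φ ((DForm.neg φ.toD).imp (.neg ξ)) M hM w').2.2.1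
      rw [dsat_imp, dsat_imp, dsat_negtoD] at h
      have hant : dsat s (.boxLe (.dyn φ ((DForm.neg φ.toD).imp (.neg ξ)))) M w' := by
        intro u hu
        show dsat s ((DForm.neg φ.toD).imp (.neg ξ)) (s.apply M φ) u
        rw [dsat_imp s _ _ (s.apply M φ) u, dsat_negtoD_apply s φ φ M u]
        intro hnu hx
        exact hcon u hnu hx hu
      have h3 := h hant hw' w hrel
      rw [dsat_imp s _ _ (s.apply M φ) w, dsat_negtoD_apply s φ φ M w] at h3
      have h4 := h3 hw
      rw [dsat_imp s _ _ (s.apply M φ) w, dsat_negtoD_apply s φ φ M w] at h4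
      exact (h4 hw) hξ
    · -- DP2a strict: use axiom 4
      intro hrel ξ hξ
      by_contra hcon
      push_neg at hcon
      have h := (hval φ ((DForm.neg φ.toD).imp (.neg ξ)) M hM w').2.2.2
      rw [dsat_imp, dsat_imp, dsat_negtoD] at h
      have hant : dsat s (.boxLt (.dyn φ ((DForm.neg φ.toD).imp (.neg ξ)))) M w' := by
        intro u hu
        show dsat s ((DForm.neg φ.toD).imp (.neg ξ)) (s.apply M φ) u
        rw [dsat_imp s _ _ (s.apply M φ) u, dsat_negtoD_apply s φ φ M u]
        intro hnu hx
        exact hcon u hnu hx hu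
      have h3 := h hant hw' w hrel
      rw [dsat_imp s _ _ (s.apply M φ) w, dsat_negtoD_apply s φ φ M w] at h3
      have h4 := h3 hw
      rw [dsat_imp s _ _ (s.apply M φ) w, dsat_negtoD_apply s φ φ M w] at h4
      exact (h4 hw) hξ
    · -- DP2b non-strict: use axiom 1
      intro hrel ξ hξ
      by_contra hcon
      push_neg at hcon
      have h := (hval φ ((DForm.neg φ.toD).imp (.neg ξ)) M hM w').1
      rw [dsat_imp, dsat_imp, dsat_negtoD] at h
      have hant : dsat s (.dyn φ (.boxLe ((DForm.neg φ.toD).imp (.neg ξ)))) M w' := by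
        show ∀ u, (s.apply M φ).le u w' → dsat s ((DForm.neg φ.toD).imp (.neg ξ)) (s.apply M φ) u
        intro u hu
        rw [dsat_imp, dsat_negtoD_apply]
        intro hnu hx
        exact hcon u hnu hx hu
      have h3 := h hant hw' w hrel
      rw [dsat_imp, dsat_negtoD] at h3
      have h4 : dsat s ((DForm.neg φ.toD).imp (.neg ξ)) (s.apply M φ) w := h3 hw
      rw [dsat_imp s _ _ (s.apply M φ) w, dsat_negtoD_apply s φ φ M w] at h4
      exact (h4 hw) hξ
    · -- DP2b strict: use axiom 2
      intro hrel ξ hξ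
      by_contra hcon
      push_neg at hcon
      have h := (hval φ ((DForm.neg φ.toD).imp (.neg ξ)) M hM w').2.1
      rw [dsat_imp, dsat_imp, dsat_negtoD] at h
      have hant : dsat s (.dyn φ (.boxLt ((DForm.neg φ.toD).imp (.neg ξ)))) M w' := by
        show ∀ u, (s.apply M φ).lt u w' → dsat s ((DForm.neg φ.toD).imp (.neg ξ)) (s.apply M φ) u
        intro u hu
        rw [dsat_imp, dsat_negtoD_apply]
        intro hnu hx
        exact hcon u hnu hx hu
      have h3 := h hant hw' w hrel
      rw [dsat_imp, dsat_negtoD] at h3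
      have h4 : dsat s ((DForm.neg φ.toD).imp (.neg ξ)) (s.apply M φ) w := h3 hw
      rw [dsat_imp s _ _ (s.apply M φ) w, dsat_negtoD_apply s φ φ M w] at h4
      exact (h4 hw) hξ
  · intro hcomp φ ξ M hM w
    refine ⟨?_, ?_, ?_, ?_⟩
    · -- axiom 1 from DP2b non-strict
      rw [dsat_imp, dsat_imp, dsat_negtoD]
      intro hant hnw u hu
      rw [dsat_imp, dsat_negtoD]
      intro hnu
      by_contra hc
      obtain ⟨w'', hnw'', hd'', hr''⟩ :=
        (hcomp M hM φ u w hnu hnw).2.2.1 hu (.neg ξ) hc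
      exact hd'' (hant w'' hr'')
    · -- axiom 2 from DP2b strict
      rw [dsat_imp, dsat_imp, dsat_negtoD]
      intro hant hnw u hu
      rw [dsat_imp, dsat_negtoD]
      intro hnu
      by_contra hc
      obtain ⟨w'', hnw'', hd'', hr''⟩ :=
        (hcomp M hM φ u w hnu hnw).2.2.2 hu (.neg ξ) hc
      exact hd'' (hant w'' hr'')
    · -- axiom 3 from DP2a non-strict
      rw [dsat_imp, dsat_imp, dsat_negtoD]
      intro hant hnw
      show ∀ u, (s.apply M φ).le u w → dsat s ((DForm.neg φ.toD).imp ξ) (s.apply M φ) u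
      intro u hu
      rw [dsat_imp, dsat_negtoD_apply]
      intro hnu
      by_contra hc
      obtain ⟨w'', hnw'', hd'', hr''⟩ :=
        (hcomp M hM φ u w hnu hnw).1 hu (.neg ξ) hc
      exact hd'' (hant w'' hr'')
    · -- axiom 4 from DP2a strict
      rw [dsat_imp, dsat_imp, dsat_negtoD]
      intro hant hnw
      show ∀ u, (s.apply M φ).lt u w → dsat s ((DForm.neg φ.toD).imp ξ) (s.apply M φ) u
      intro u hu
      rw [dsat_imp, dsat_negtoD_apply]
      intro hnu
      by_contra hc
      obtain ⟨w'', hnw'', hd'', hr''⟩ :=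
        (hcomp M hM φ u w hnu hnw).2.1 hu (.neg ξ) hc
      exact hd'' (hant w'' hr'')
end

section
/- Let 𝔐 be a class of preference models and ★ a dynamic operator closed over 𝔐. The schema [★φ][≤](φ → ξ) → (¬φ → [≤][★φ](φ → ξ)) is valid in ⟨𝔐, ★⟩ for all φ ∈ L_0 and ξ ∈ L_≤(★) if and only if ★ is 𝔐-DP4-compliant. -/
/-- `★` is `𝔐`-DP4-compliant. -/
def DP4Compliant {P : Type} (s : DynOp P) (𝔐 : Set (PrefModel P)) : Prop :=
  ∀ M ∈ 𝔐, ∀ (φ : PForm P) (w w' : M.W),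
    psat M φ w → ¬ psat M φ w' → M.le w w' →
      ∀ ξ : DForm P, dsat s (.dyn φ ξ) M w →
        ∃ w'' : M.W, psat M φ w'' ∧ dsat s (.dyn φ ξ) M w'' ∧ s.rel M φ w'' w'

lemma toD_sat {P : Type} (s : DynOp P) (φ : PForm P) :
    ∀ (M : PrefModel P) (w : M.W), dsat s φ.toD M w ↔ psat M φ w := by
  induction φ with
  | atom p => intro M w; rfl
  | neg φ ih => intro M w; simp [PForm.toD, dsat, psat, ih]
  | and φ ψ ih₁ ih₂ => intro M w; simp [PForm.toD, dsat, psat, ih₁, ih₂]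

lemma psat_apply {P : Type} (s : DynOp P) (M : PrefModel P) (φ' ψ : PForm P)
    (w : M.W) : psat (s.apply M φ') ψ w ↔ psat M ψ w := by
  induction ψ with
  | atom p => rfl
  | neg ψ ih => simp [psat, ih]
  | and ψ χ ih₁ ih₂ => simp [psat, ih₁, ih₂]

theorem dp4_compliance_characterisation {P : Type}
    (𝔐 : Set (PrefModel P)) (s : DynOp P) (hclosed : ClosedOver s 𝔐) :
    (∀ (φ : PForm P) (ξ : DForm P), ∀ M ∈ 𝔐, ∀ w : M.W,
      dsat s ((DForm.dyn φ (.boxLe (φ.toD.imp ξ))).imp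
        ((DForm.neg φ.toD).imp (.boxLe (.dyn φ (φ.toD.imp ξ))))) M w) ↔
      DP4Compliant s 𝔐 := by
  constructor
  · intro hval M hM φ w w' hφw hφw' hle ξ hξ
    have h := hval φ (.neg ξ) M hM w'
    simp only [DForm.imp, dsat] at h
    by_contra hno
    push_neg at hno
    have hP : ¬ dsat s φ.toD M w' := fun hh => hφw' ((toD_sat s φ M w').mp hh)
    have hA : ∀ u, (s.apply M φ).le u w' →
        ¬(dsat s φ.toD (s.apply M φ) u ∧ ¬¬ dsat s ξ (s.apply M φ) u) := by
      intro u hu hc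
      exact hno u ((psat_apply s M φ φ u).mp ((toD_sat s φ (s.apply M φ) u).mp hc.1))
        (not_not.mp hc.2) hu
    have hw : dsat s φ.toD (s.apply M φ) w ∧ ¬¬ dsat s ξ (s.apply M φ) w :=
      ⟨(toD_sat s φ (s.apply M φ) w).mpr ((psat_apply s M φ φ w).mpr hφw), not_not_intro hξ⟩
    have hB : ¬(¬ dsat s φ.toD M w' ∧
        ¬ ∀ u, M.le u w' →
          ¬(dsat s φ.toD (s.apply M φ) u ∧ ¬¬ dsat s ξ (s.apply M φ) u)) :=
      not_not.mp (fun hB => h ⟨hA, hB⟩)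
    have hQ : ∀ u, M.le u w' →
        ¬(dsat s φ.toD (s.apply M φ) u ∧ ¬¬ dsat s ξ (s.apply M φ) u) := by
      by_contra hQ; exact hB ⟨hP, hQ⟩
    exact hQ w hle hw
  · intro hdp4 φ ξ M hM w
    simp only [DForm.imp, dsat]
    rintro ⟨hA, hB⟩
    apply hB
    rintro ⟨hnφ, hnQ⟩
    apply hnQ
    rintro u hle ⟨hφu, hnξu⟩
    have hφu' : psat M φ u :=
      (psat_apply s M φ φ u).mp ((toD_sat s φ (s.apply M φ) u).mp hφu)
    have hnφw : ¬ psat M φ w := fun hh => hnφ ((toD_sat s φ M w).mpr hh)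
    obtain ⟨w'', hφw'', hd, hrel⟩ := hdp4 M hM φ u w hφu' hnφw hle (.neg ξ) hnξu
    exact hA w'' hrel ⟨(toD_sat s φ (s.apply M φ) w'').mpr ((psat_apply s M φ φ w'').mpr hφw''), hd⟩
end
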